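/- Let G be a group, ρ : G → Homeo₊(ℝ) a group homomorphism, x₀ ∈ ℝ, and let α, β ∈ G be commuting elements such that ρ(α)(x₀) = x₀ and no point of ℝ is fixed by both ρ(α) and ρ(β). Let Stab = {g ∈ G : ρ(g)(x₀) = x₀} and suppose Stab admits a left-order (or is trivial). Then G admits a left-order < such that: (i) g₁ ≤ g₂ implies ρ(g₁)(x₀) ≤ ρ(g₂)(x₀); (ii) Stab is a <-convex subgroup of G; (iii) β is <-cofinal. -/

import Mathlib

/-- Let ρ : G → Homeo₊(ℝ) be a homomorphism, x₀ ∈ ℝ, and α, β commuting elements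
with ρ(α)(x₀) = x₀ and no common fixed point of ρ(α) and ρ(β). If the stabilizer
of x₀ admits a left-order (expressed via a positive cone; this includes the trivial
case), then G admits a left-order < such that: (i) g₁ ≤ g₂ implies
ρ(g₁)(x₀) ≤ ρ(g₂)(x₀); (ii) the stabilizer is <-convex; (iii) β is <-cofinal. -/
theorem stmt_4 {G : Type*} [Group G] (ρ : G →* (ℝ ≃o ℝ)) (x₀ : ℝ)
    (α β : G) (hcomm : α * β = β * α)
    (hfix : ρ α x₀ = x₀)
    (hnofix : ∀ x : ℝ, ρ α x = x → ρ β x = x → False)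
    (hstab : ∃ P₀ : Set G, (∀ g ∈ P₀, ρ g x₀ = x₀) ∧
      (∀ a ∈ P₀, ∀ b ∈ P₀, a * b ∈ P₀) ∧
      (∀ g : G, ρ g x₀ = x₀ →
        (g ∈ P₀ ∧ g ≠ 1 ∧ g⁻¹ ∉ P₀) ∨ (g = 1 ∧ g ∉ P₀ ∧ g⁻¹ ∉ P₀) ∨
        (g⁻¹ ∈ P₀ ∧ g ∉ P₀ ∧ g ≠ 1))) :
    ∃ r : G → G → Prop, IsStrictTotalOrder G r ∧
      (∀ g a b : G, r a b → r (g * a) (g * b)) ∧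
      (∀ g₁ g₂ : G, (r g₁ g₂ ∨ g₁ = g₂) → ρ g₁ x₀ ≤ ρ g₂ x₀) ∧
      (∀ k h x : G, ρ k x₀ = x₀ → ρ h x₀ = x₀ → r k x → r x h → ρ x x₀ = x₀) ∧
      (∀ h : G, ∃ m n : ℤ,
        (r (β ^ m) h ∨ β ^ m = h) ∧ (r h (β ^ n) ∨ h = β ^ n)) := by
  obtain ⟨P₀, hPfix, hPmul, hPtri⟩ := hstab
  have h1 : (1 : G) ∉ P₀ := by
    rcases hPtri 1 (by simp) with ⟨_, h, _⟩ | ⟨_, h, _⟩ | ⟨_, _, h⟩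
    · exact absurd rfl h
    · exact h
    · exact absurd rfl h
  have hcomp : ∀ (g h : G) (x : ℝ), ρ (g * h) x = ρ g (ρ h x) := by
    intro g h x; rw [map_mul]; rfl
  -- membership in P₀ implies equal orbit points
  have heq : ∀ g h : G, g⁻¹ * h ∈ P₀ → ρ g x₀ = ρ h x₀ := by
    intro g h hm
    calc ρ g x₀ = ρ g (ρ (g⁻¹ * h) x₀) := by rw [hPfix _ hm]
    _ = ρ (g * (g⁻¹ * h)) x₀ := (hcomp _ _ _).symm
    _ = ρ h x₀ := by rw [mul_inv_cancel_left]
  set r : G → G → Prop := fun g h => ρ g x₀ < ρ h x₀ ∨ g⁻¹ * h ∈ P₀ with hrdef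
  have hirr : ∀ g : G, ¬ r g g := by
    intro g hg
    rcases hg with hg | hg
    · exact lt_irrefl _ hg
    · simp only [inv_mul_cancel] at hg; exact h1 hg
  have htrans : ∀ a b c : G, r a b → r b c → r a c := by
    intro a b c hab hbc
    rcases hab with hab | hab <;> rcases hbc with hbc | hbc
    · exact Or.inl (hab.trans hbc)
    · exact Or.inl (by rw [← heq _ _ hbc]; exact hab)
    · exact Or.inl (by rw [heq _ _ hab]; exact hbc)
    · refine Or.inr ?_
      have := hPmul _ hab _ hbc
      simpa [mul_assoc] using this
  have htri : ∀ a b : G, r a b ∨ a = b ∨ r b a := by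
    intro a b
    rcases lt_trichotomy (ρ a x₀) (ρ b x₀) with h | h | h
    · exact Or.inl (Or.inl h)
    · have hx : ρ (a⁻¹ * b) x₀ = x₀ := by
        calc ρ (a⁻¹ * b) x₀ = ρ a⁻¹ (ρ b x₀) := hcomp _ _ _
        _ = ρ a⁻¹ (ρ a x₀) := by rw [h]
        _ = ρ (a⁻¹ * a) x₀ := (hcomp _ _ _).symm
        _ = x₀ := by rw [inv_mul_cancel, map_one]; rfl
      rcases hPtri _ hx with ⟨hm, _, _⟩ | ⟨hm, _, _⟩ | ⟨hm, _, _⟩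
      · exact Or.inl (Or.inr hm)
      · exact Or.inr (Or.inl (by rwa [inv_mul_eq_one] at hm))
      · exact Or.inr (Or.inr (Or.inr (by simpa using hm)))
    · exact Or.inr (Or.inr (Or.inl h))
  have hmono : ∀ g₁ g₂ : G, (r g₁ g₂ ∨ g₁ = g₂) → ρ g₁ x₀ ≤ ρ g₂ x₀ := by
    intro g₁ g₂ h
    rcases h with (h | h) | h
    · exact le_of_lt h
    · exact le_of_eq (heq _ _ h)
    · exact le_of_eq (by rw [h])
  refine ⟨r, ?_, ?_, hmono, ?_, ?_⟩
  · exact { trichotomous := fun a b hab hba => ((htri a b).resolve_left hab).resolve_right hba, irrefl := hirr, trans := htrans }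
  · -- left invariance
    intro g a b hab
    rcases hab with hab | hab
    · exact Or.inl (by simpa [map_mul] using (ρ g).strictMono hab)
    · exact Or.inr (by simpa [mul_assoc] using hab)
  · -- convexity
    intro k h x hk hh hkx hxh
    have h1 := hmono k x (Or.inl hkx)
    have h2 := hmono x h (Or.inl hxh)
    rw [hk] at h1; rw [hh] at h2
    exact le_antisymm h2 h1
  · -- cofinality of β
    intro h
    set b : ℤ → ℝ := fun n => ρ (β ^ n) x₀ with hbdef
    have hc : Commute α β := hcomm
    have hαb : ∀ n : ℤ, ρ α (b n) = b n := by
      intro n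
      calc ρ α (b n) = ρ (α * β ^ n) x₀ := (hcomp _ _ _).symm
      _ = ρ (β ^ n * α) x₀ := by rw [(hc.zpow_right n).eq]
      _ = ρ (β ^ n) (ρ α x₀) := hcomp _ _ _
      _ = b n := by rw [hfix]
    have hβb : ∀ n : ℤ, ρ β (b n) = b (n + 1) := by
      intro n
      calc ρ β (b n) = ρ (β * β ^ n) x₀ := (hcomp _ _ _).symm
      _ = b (n + 1) := by rw [← zpow_one_add, add_comm 1 n]
    have hαim : ρ α '' Set.range b = Set.range b := by
      ext y
      constructor
      · rintro ⟨z, ⟨n, rfl⟩, rfl⟩; exact ⟨n, (hαb n).symm⟩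
      · rintro ⟨n, rfl⟩; exact ⟨b n, ⟨n, rfl⟩, hαb n⟩
    have hβim : ρ β '' Set.range b = Set.range b := by
      ext y
      constructor
      · rintro ⟨z, ⟨n, rfl⟩, rfl⟩; exact ⟨n + 1, (hβb n).symm⟩
      · rintro ⟨n, rfl⟩; exact ⟨b (n - 1), ⟨n - 1, rfl⟩, by rw [hβb]; ring_nf⟩
    have hne : (Set.range b).Nonempty := ⟨b 0, 0, rfl⟩
    have hba : ¬ BddAbove (Set.range b) := by
      intro hbdd
      have hβL : ρ β (sSup (Set.range b)) = sSup (Set.range b) := by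
        rw [OrderIso.map_csSup' _ hne hbdd, hβim]
      have hαL : ρ α (sSup (Set.range b)) = sSup (Set.range b) := by
        rw [OrderIso.map_csSup' _ hne hbdd, hαim]
      exact hnofix _ hαL hβL
    have hbb : ¬ BddBelow (Set.range b) := by
      intro hbdd
      have hβL : ρ β (sInf (Set.range b)) = sInf (Set.range b) := by
        rw [OrderIso.map_csInf' _ hne hbdd, hβim]
      have hαL : ρ α (sInf (Set.range b)) = sInf (Set.range b) := by
        rw [OrderIso.map_csInf' _ hne hbdd, hαim]
      exact hnofix _ hαL hβL
    obtain ⟨y, ⟨n, rfl⟩, hy⟩ := not_bddAbove_iff.mp hba (ρ h x₀)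
    obtain ⟨z, ⟨m, rfl⟩, hz⟩ := not_bddBelow_iff.mp hbb (ρ h x₀)
    exact ⟨m, n, Or.inl (Or.inl hz), Or.inl (Or.inl hy)⟩
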